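/- For all positive integers r and k, if G is a graph and X is the set of vertices of G with degree at most rk - 1, then there exists an r-coloring of all edges of G incident with X such that every vertex in X is incident with at most k edges of each color. -/

import Mathlib

open SimpleGraph Finset

/-- `H` has a copy in `G`: an injective graph homomorphism from `H` to `G`. -/
def HasCopy {W V : Type*} (H : SimpleGraph W) (G : SimpleGraph V) : Prop :=
  ∃ f : H →g G, Function.Injective f

/-- Under the `r`-edge-coloring `c`, some color class of `G` contains a copy of `H`. -/
def HasMonoCopy {W V : Type*} (H : SimpleGraph W) (G : SimpleGraph V)
    {r : ℕ} (c : Sym2 V → Fin r) : Prop :=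
  ∃ i : Fin r, HasCopy H (SimpleGraph.fromRel fun u v => G.Adj u v ∧ c s(u, v) = i)

/-- Degree of a vertex, as the natural cardinality of its neighbor set. -/
noncomputable def deg {V : Type*} (G : SimpleGraph V) (v : V) : ℕ := (G.neighborSet v).ncard


section Vizing
variable {W : Type*} [Fintype W] [DecidableEq W]
variable (G : SimpleGraph W) [DecidableRel G.Adj] (N : ℕ) (x : W)

/-- colors not used by non-`x` edges at `v` -/
def Free0 (c : Sym2 W → Fin N) (v : W) : Finset (Fin N) :=
  Finset.univ \ ((G.neighborFinset v).erase x).image fun u => c s(v, u)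

/-- colors not used by edges at `x` other than `s(x,z)` -/
def FreeX (c : Sym2 W → Fin N) (z : W) : Finset (Fin N) :=
  Finset.univ \ ((G.neighborFinset x).erase z).image fun u => c s(x, u)

/-- proper except possibly at the edge `s(x,z)` -/
def ProperExc (c : Sym2 W → Fin N) (z : W) : Prop :=
  ∀ ⦃v u u'⦄, G.Adj v u → G.Adj v u' → s(v, u) ≠ s(x, z) → s(v, u') ≠ s(x, z) →
    c s(v, u) = c s(v, u') → u = u'

def ProperAll (c : Sym2 W → Fin N) : Prop :=
  ∀ ⦃v u u'⦄, G.Adj v u → G.Adj v u' → c s(v, u) = c s(v, u') → u = u'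

def IsFan (c : Sym2 W → Fin N) (l : List W) : Prop :=
  l.Nodup ∧ (∀ z ∈ l, G.Adj x z) ∧ l.Chain' (fun z w => c s(x, w) ∈ Free0 G N x c z)

variable {G N x}

lemma mem_Free0 {c : Sym2 W → Fin N} {v : W} {γ : Fin N} :
    γ ∈ Free0 G N x c v ↔ ∀ u, G.Adj v u → u ≠ x → c s(v, u) ≠ γ := by
  simp only [Free0, Finset.mem_sdiff, Finset.mem_univ, true_and, Finset.mem_image,
    Finset.mem_erase, SimpleGraph.mem_neighborFinset]
  constructor
  · intro h u hu hux heq; exact h ⟨u, ⟨hux, hu⟩, heq⟩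
  · rintro h ⟨u, ⟨hux, hu⟩, heq⟩; exact h u hu hux heq

lemma mem_FreeX {c : Sym2 W → Fin N} {z : W} {γ : Fin N} :
    γ ∈ FreeX G N x c z ↔ ∀ u, G.Adj x u → u ≠ z → c s(x, u) ≠ γ := by
  simp only [FreeX, Finset.mem_sdiff, Finset.mem_univ, true_and, Finset.mem_image,
    Finset.mem_erase, SimpleGraph.mem_neighborFinset]
  constructor
  · intro h u hu hux heq; exact h ⟨u, ⟨hux, hu⟩, heq⟩
  · rintro h ⟨u, ⟨hux, hu⟩, heq⟩; exact h u hu hux heq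

lemma Free0_card_ge {c : Sym2 W → Fin N} {v : W} (hv : G.Adj v x) :
    N - (G.degree v - 1) ≤ (Free0 G N x c v).card := by
  have h1 : ((G.neighborFinset v).erase x).card = G.degree v - 1 := by
    rw [Finset.card_erase_of_mem (by rwa [SimpleGraph.mem_neighborFinset])]
    rfl
  have h2 := Finset.card_image_le (s := (G.neighborFinset v).erase x)
    (f := fun u => c s(v, u))
  have h3 := Finset.le_card_sdiff (((G.neighborFinset v).erase x).image fun u => c s(v, u))
    Finset.univ
  simp only [Free0]
  have h4 : (Finset.univ : Finset (Fin N)).card = N := by simp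
  omega

lemma FreeX_card_ge {c : Sym2 W → Fin N} {z : W} (hz : G.Adj x z) :
    N - (G.degree x - 1) ≤ (FreeX G N x c z).card := by
  have h1 : ((G.neighborFinset x).erase z).card = G.degree x - 1 := by
    rw [Finset.card_erase_of_mem (by rwa [SimpleGraph.mem_neighborFinset])]
    rfl
  have h2 := Finset.card_image_le (s := (G.neighborFinset x).erase z)
    (f := fun u => c s(x, u))
  have h3 := Finset.le_card_sdiff (((G.neighborFinset x).erase z).image fun u => c s(x, u))
    Finset.univ
  simp only [FreeX]
  have h4 : (Finset.univ : Finset (Fin N)).card = N := by simp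
  omega

end Vizing

section Vizing2
variable {W : Type*} [Fintype W] [DecidableEq W]
variable {G : SimpleGraph W} [DecidableRel G.Adj] {N : ℕ} {x : W}

/-- recolor a single edge -/
def setc (c : Sym2 W → Fin N) (e₀ : Sym2 W) (γ : Fin N) : Sym2 W → Fin N :=
  fun e => if e = e₀ then γ else c e

lemma sxz_ne_sxw {z w : W} (h : z ≠ w) : s(x, z) ≠ s(x, w) :=
  fun hh => h (Sym2.congr_right.mp hh)

lemma assign_lemma {c : Sym2 W → Fin N} {z : W} {γ : Fin N}
    (hP : ProperExc G N x c z) (hxz : G.Adj x z)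
    (hγx : γ ∈ FreeX G N x c z) (hγz : γ ∈ Free0 G N x c z) :
    ProperAll G N (setc c s(x, z) γ) := by
  have key : ∀ ⦃v u u'⦄, G.Adj v u → G.Adj v u' →
      s(v,u) = s(x,z) → ¬ s(v,u') = s(x,z) →
      γ = c s(v, u') → False := by
    intro v u u' hu hu' η1 η2 heq
    rcases Sym2.eq_iff.mp η1 with ⟨hv, hu1⟩ | ⟨hv, hu1⟩
    · rw [hv] at hu' heq η2
      have hne : u' ≠ z := fun h => η2 (by rw [h])
      exact mem_FreeX.mp hγx u' hu' hne heq.symm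
    · rw [hv] at hu' heq η2
      have hne : u' ≠ x := fun h => η2 (by rw [h, Sym2.eq_swap])
      exact mem_Free0.mp hγz u' hu' hne heq.symm
  intro v u u' hu hu' heq
  by_cases η1 : s(v, u) = s(x, z) <;> by_cases η2 : s(v, u') = s(x, z)
  · exact (Sym2.congr_right).mp (η1.trans η2.symm)
  · exact absurd (by simpa [setc, η1, η2] using heq) (fun h => key hu hu' η1 η2 h)
  · exact absurd (by simpa [setc, η1, η2] using heq.symm) (fun h => key hu' hu η2 η1 h)
  · exact hP hu hu' η1 η2 (by simpa [setc, η1, η2] using heq)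

lemma shift_proper {c : Sym2 W → Fin N} {z w : W}
    (hP : ProperExc G N x c z) (hxw : G.Adj x w) (hwz : w ≠ z)
    (hfree : c s(x, w) ∈ Free0 G N x c z) :
    ProperExc G N x (setc c s(x, z) (c s(x, w))) w := by
  have key : ∀ ⦃v u u'⦄, G.Adj v u → G.Adj v u' →
      s(v,u) = s(x,z) → ¬ s(v,u') = s(x,z) → s(v, u') ≠ s(x, w) →
      c s(x, w) = c s(v, u') → False := by
    intro v u u' hu hu' η1 η2 h2 heq
    rcases Sym2.eq_iff.mp η1 with ⟨hv, hu1⟩ | ⟨hv, hu1⟩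
    · rw [hv] at hu' heq η2 h2
      have huw : u' ≠ w := fun h => h2 (by rw [h])
      exact huw (hP hxw hu' (sxz_ne_sxw hwz) η2 heq).symm
    · rw [hv] at hu' heq η2
      have hne : u' ≠ x := fun h => η2 (by rw [h, Sym2.eq_swap])
      exact mem_Free0.mp hfree u' hu' hne heq.symm
  intro v u u' hu hu' h1 h2 heq
  by_cases η1 : s(v, u) = s(x, z) <;> by_cases η2 : s(v, u') = s(x, z)
  · exact (Sym2.congr_right).mp (η1.trans η2.symm)
  · exact absurd (by simpa [setc, η1, η2] using heq) (fun h => key hu hu' η1 η2 h2 h)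
  · exact absurd (by simpa [setc, η1, η2] using heq.symm) (fun h => key hu' hu η2 η1 h1 h)
  · exact hP hu hu' η1 η2 (by simpa [setc, η1, η2] using heq)

lemma shift_FreeX {c : Sym2 W → Fin N} {z w : W}
    (hxz : G.Adj x z) (hxw : G.Adj x w) (hwz : w ≠ z) :
    FreeX G N x (setc c s(x, z) (c s(x, w))) w = FreeX G N x c z := by
  ext γ
  simp only [mem_FreeX]
  constructor
  · intro h u hu huz
    by_cases huw : u = w
    · rw [huw]
      have := h z hxz hwz.symm
      simpa [setc] using this
    · have := h u hu huw
      rwa [setc, if_neg (fun hh => huz (Sym2.congr_right.mp hh))] at this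
  · intro h u hu huw
    by_cases huz : u = z
    · rw [huz, setc, if_pos rfl]
      exact h w hxw hwz
    · have := h u hu huz
      rw [setc, if_neg (fun hh => huz (Sym2.congr_right.mp hh))]
      exact this

lemma Free0_congr {c c' : Sym2 W → Fin N} {v : W} (hv : v ≠ x)
    (h : ∀ u, G.Adj v u → u ≠ x → c' s(v, u) = c s(v, u)) :
    Free0 G N x c' v = Free0 G N x c v := by
  ext γ
  simp only [mem_Free0]
  constructor
  · intro hh u hu hux; rw [← h u hu hux]; exact hh u hu hux
  · intro hh u hu hux; rw [h u hu hux]; exact hh u hu hux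

lemma shift_Free0 {c : Sym2 W → Fin N} {z w : W} {v : W} (hv : v ≠ x) :
    Free0 G N x (setc c s(x, z) (c s(x, w))) v = Free0 G N x c v := by
  apply Free0_congr hv
  intro u hu hux
  rw [setc, if_neg]
  intro hh
  rcases Sym2.eq_iff.mp hh with ⟨h1, h2⟩ | ⟨h1, h2⟩
  · exact hv h1
  · exact hux h2

end Vizing2

section Vizing3
variable {W : Type*} [Fintype W] [DecidableEq W]
variable {G : SimpleGraph W} [DecidableRel G.Adj] {N : ℕ} {x : W}

lemma chain'_transform {α : Type*} {f g : α → α → Prop} :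
    ∀ {l : List α}, List.Chain' f l →
      (∀ z w, z ∈ l → w ∈ l.tail → f z w → g z w) → List.Chain' g l
  | [], _, _ => List.isChain_nil
  | [_], _, _ => List.isChain_singleton _
  | a :: b :: t, h, H => by
    unfold List.Chain' at h ⊢
    rw [List.isChain_cons_cons] at h ⊢
    refine ⟨H a b (by simp) (by simp) h.1, chain'_transform h.2 ?_⟩
    intro z w hz hw
    exact H z w (List.mem_cons_of_mem _ hz) (List.mem_cons_of_mem _ hw)

lemma master_lemma : ∀ (rest : List W) (c : Sym2 W → Fin N) (z : W),
    IsFan G N x c (z :: rest) → ProperExc G N x c z →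
    ∀ γ : Fin N, γ ∈ FreeX G N x c z →
      γ ∈ Free0 G N x c ((z :: rest).getLast (List.cons_ne_nil z rest)) →
      ∃ cc, ProperAll G N cc := by
  intro rest
  induction rest with
  | nil =>
    intro c z hfan hP γ hγx hγl
    simp only [List.getLast_singleton] at hγl
    exact ⟨_, assign_lemma hP (hfan.2.1 z (by simp)) hγx hγl⟩
  | cons w rest' ih =>
    intro c z hfan hP γ hγx hγl
    obtain ⟨hnd, hadj, hch⟩ := hfan
    have hxz : G.Adj x z := hadj z (by simp)
    have hxw : G.Adj x w := hadj w (by simp)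
    have hznotin : z ∉ w :: rest' := (List.nodup_cons.mp hnd).1
    have hwz : w ≠ z := fun h => hznotin (h ▸ List.mem_cons_self)
    unfold List.Chain' at hch
    rw [List.isChain_cons_cons] at hch
    set c' := setc c s(x, z) (c s(x, w)) with hc'
    have hP' : ProperExc G N x c' w := shift_proper hP hxw hwz hch.1
    have hcol : ∀ u, u ∈ w :: rest' → c' s(x, u) = c s(x, u) := by
      intro u hu
      have huz : u ≠ z := fun h => hznotin (h ▸ hu)
      rw [hc', setc, if_neg (fun hh => huz (Sym2.congr_right.mp hh))]
    have hfree0 : ∀ v : W, v ≠ x → Free0 G N x c' v = Free0 G N x c v :=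
      fun v hv => shift_Free0 hv
    have hfan' : IsFan G N x c' (w :: rest') := by
      refine ⟨(List.nodup_cons.mp hnd).2, fun u hu => hadj u (List.mem_cons_of_mem _ hu), ?_⟩
      refine chain'_transform hch.2 ?_
      intro z₁ w₁ hz₁ hw₁ hf
      rw [hcol w₁ (List.mem_cons_of_mem _ hw₁), hfree0 z₁ (hadj z₁ (List.mem_cons_of_mem _ hz₁)).ne']
      exact hf
    have hlast : (w :: rest').getLast (List.cons_ne_nil w rest') =
        (z :: w :: rest').getLast (List.cons_ne_nil _ _) := by
      rw [List.getLast_cons (List.cons_ne_nil w rest')]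
    have hlastmem : (w :: rest').getLast (List.cons_ne_nil w rest') ∈ w :: rest' :=
      List.getLast_mem _
    refine ih c' w hfan' hP' γ ?_ ?_
    · rw [hc', shift_FreeX hxz hxw hwz]; exact hγx
    · rw [hfree0 _ (hadj _ (List.mem_cons_of_mem _ hlastmem)).ne', hlast]
      exact hγl

end Vizing3

section Vizing4
variable {W : Type*} [Fintype W] [DecidableEq W]
variable {G : SimpleGraph W} [DecidableRel G.Adj] {N : ℕ} {x : W}

variable (G N x) in
/-- the subgraph of `G` minus `s(x,z)` consisting of edges colored `α` or `β` -/
def HG (c : Sym2 W → Fin N) (z : W) (α β : Fin N) : SimpleGraph W where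
  Adj u v := G.Adj u v ∧ s(u, v) ≠ s(x, z) ∧ (c s(u, v) = α ∨ c s(u, v) = β)
  symm := by
    constructor
    intro u v ⟨h1, h2, h3⟩
    refine ⟨h1.symm, ?_, ?_⟩ <;> rw [Sym2.eq_swap] <;> assumption
  loopless := ⟨fun v h => G.loopless.irrefl v h.1⟩

variable (G N x) in
def SS (c : Sym2 W → Fin N) (z : W) (α β : Fin N) : Set W :=
  {v | (HG G N x c z α β).Reachable x v}

def swapCol (α β : Fin N) (γ : Fin N) : Fin N :=
  if γ = α then β else if γ = β then α else γ

lemma swapCol_invol (α β : Fin N) : Function.Involutive (swapCol α β) := by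
  intro γ
  unfold swapCol
  split_ifs <;> simp_all

lemma swapCol_inj (α β : Fin N) : Function.Injective (swapCol α β) :=
  (swapCol_invol α β).injective

lemma swapCol_eq_self {α β γ : Fin N} (h1 : γ ≠ α) (h2 : γ ≠ β) : swapCol α β γ = γ := by
  unfold swapCol; rw [if_neg h1, if_neg h2]

lemma swapCol_alpha (α β : Fin N) : swapCol α β α = β := by unfold swapCol; rw [if_pos rfl]

variable (G N x) in
open Classical in
noncomputable def kswap (c : Sym2 W → Fin N) (z : W) (α β : Fin N) : Sym2 W → Fin N :=
  fun e => if e ∈ (HG G N x c z α β).edgeSet ∧ (∃ a ∈ e, a ∈ SS G N x c z α β)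
    then swapCol α β (c e) else c e

lemma x_mem_SS {c : Sym2 W → Fin N} {z : W} {α β : Fin N} : x ∈ SS G N x c z α β :=
  SimpleGraph.Reachable.refl x

lemma SS_closed {c : Sym2 W → Fin N} {z : W} {α β : Fin N} {u v : W}
    (hu : u ∈ SS G N x c z α β) (ha : (HG G N x c z α β).Adj u v) : v ∈ SS G N x c z α β :=
  hu.trans ha.reachable

lemma kswap_cases {c : Sym2 W → Fin N} {z : W} {α β : Fin N} (e : Sym2 W) :
    kswap G N x c z α β e = c e ∨ kswap G N x c z α β e = swapCol α β (c e) := by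
  unfold kswap
  split_ifs <;> simp

lemma kswap_mem {c : Sym2 W → Fin N} {z : W} {α β : Fin N} {v u : W}
    (hv : v ∈ SS G N x c z α β) (hadj : G.Adj v u) (hne : s(v, u) ≠ s(x, z)) :
    kswap G N x c z α β s(v, u) = swapCol α β (c s(v, u)) := by
  by_cases hc : c s(v, u) = α ∨ c s(v, u) = β
  · have hHadj : (HG G N x c z α β).Adj v u := ⟨hadj, hne, hc⟩
    unfold kswap
    rw [if_pos ⟨hHadj, ⟨v, Sym2.mem_mk_left v u, hv⟩⟩]
  · unfold kswap
    rw [if_neg, swapCol_eq_self (fun h => hc (Or.inl h)) (fun h => hc (Or.inr h))]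
    rintro ⟨hmem, -⟩
    exact hc ((SimpleGraph.mem_edgeSet _).mp hmem).2.2

lemma kswap_not_mem {c : Sym2 W → Fin N} {z : W} {α β : Fin N} {v u : W}
    (hv : v ∉ SS G N x c z α β) (hadj : G.Adj v u) :
    kswap G N x c z α β s(v, u) = c s(v, u) := by
  unfold kswap
  rw [if_neg]
  rintro ⟨hmem, a, hamem, haS⟩
  have hHadj : (HG G N x c z α β).Adj v u := (SimpleGraph.mem_edgeSet _).mp hmem
  rcases Sym2.mem_iff.mp hamem with rfl | rfl
  · exact hv haS
  · exact hv (SS_closed haS hHadj.symm)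

lemma kswap_proper {c : Sym2 W → Fin N} {z : W} {α β : Fin N}
    (hP : ProperExc G N x c z) : ProperExc G N x (kswap G N x c z α β) z := by
  intro v u u' hu hu' h1 h2 heq
  by_cases hv : v ∈ SS G N x c z α β
  · rw [kswap_mem hv hu h1, kswap_mem hv hu' h2] at heq
    exact hP hu hu' h1 h2 (swapCol_inj α β heq)
  · rw [kswap_not_mem hv hu, kswap_not_mem hv hu'] at heq
    exact hP hu hu' h1 h2 heq

lemma edge_ne_exc_of_ne_x {z v u : W} (hv : v ≠ x) (hu : u ≠ x) : s(v, u) ≠ s(x, z) := by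
  intro h
  rcases Sym2.eq_iff.mp h with ⟨h1, -⟩ | ⟨-, h2⟩
  · exact hv h1
  · exact hu h2

lemma kswap_Free0_mem {c : Sym2 W → Fin N} {z : W} {α β : Fin N} {v : W} {γ : Fin N}
    (hvS : v ∈ SS G N x c z α β) (hv : v ≠ x) (hγ : γ ∈ Free0 G N x c v) :
    swapCol α β γ ∈ Free0 G N x (kswap G N x c z α β) v := by
  rw [mem_Free0]
  intro u hu hux
  rw [kswap_mem hvS hu (edge_ne_exc_of_ne_x hv hux)]
  intro h
  exact mem_Free0.mp hγ u hu hux (swapCol_inj α β h)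

lemma kswap_Free0_not_mem {c : Sym2 W → Fin N} {z : W} {α β : Fin N} {v : W}
    (hvS : v ∉ SS G N x c z α β) (hv : v ≠ x) :
    Free0 G N x (kswap G N x c z α β) v = Free0 G N x c v :=
  Free0_congr hv (fun u hu _ => kswap_not_mem hvS hu)

lemma kswap_FreeX_mem {c : Sym2 W → Fin N} {z : W} {α β : Fin N} {γ : Fin N}
    (hγ : γ ∈ FreeX G N x c z) :
    swapCol α β γ ∈ FreeX G N x (kswap G N x c z α β) z := by
  rw [mem_FreeX]
  intro u hu huz
  rw [kswap_mem x_mem_SS hu (fun h => huz (Sym2.congr_right.mp h))]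
  intro h
  exact mem_FreeX.mp hγ u hu huz (swapCol_inj α β h)

lemma kswap_Free0_other {c : Sym2 W → Fin N} {z : W} {α β : Fin N} {v : W} {γ : Fin N}
    (hγa : γ ≠ α) (hγb : γ ≠ β) (hv : v ≠ x) :
    (γ ∈ Free0 G N x (kswap G N x c z α β) v ↔ γ ∈ Free0 G N x c v) := by
  have key : ∀ e : Sym2 W, kswap G N x c z α β e = γ ↔ c e = γ := by
    intro e
    rcases kswap_cases (G := G) (N := N) (x := x) (c := c) (z := z) (α := α) (β := β) e with
      h | h <;> rw [h]
    constructor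
    · intro hh
      have := (swapCol_invol α β) (c e)
      rw [hh] at this
      rw [← this, swapCol_eq_self hγa hγb]
    · intro hh; rw [hh, swapCol_eq_self hγa hγb]
  simp only [mem_Free0]
  constructor
  · intro h u hu hux hc; exact h u hu hux ((key _).mpr hc)
  · intro h u hu hux hc; exact h u hu hux ((key _).mp hc)

end Vizing4

section Vizing5
variable {W : Type*} [Fintype W] [DecidableEq W]

lemma exists_pred {H : SimpleGraph W} {x v : W} (hr : H.Reachable x v) (hv : v ≠ x) :
    ∃ w, H.Adj w v ∧ H.dist x w + 1 = H.dist x v := by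
  obtain ⟨p, hp⟩ := hr.exists_walk_length_eq_dist
  have hd : 0 < H.dist x v := hr.pos_dist_of_ne (Ne.symm hv)
  rcases hq : p.reverse with _ | ⟨hadj, q⟩
  · exfalso
    apply hv
    have hlen0 : p.length = 0 := by
      have := congrArg SimpleGraph.Walk.length hq
      simpa using this
    exact (SimpleGraph.Walk.eq_of_length_eq_zero hlen0).symm
  · rename_i w
    refine ⟨w, hadj.symm, ?_⟩
    have hlen : q.length + 1 = H.dist x v := by
      have := congrArg SimpleGraph.Walk.length hq
      simp only [SimpleGraph.Walk.length_reverse, SimpleGraph.Walk.length_cons] at this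
      omega
    have h1 : H.dist x w ≤ q.length := by
      have := SimpleGraph.dist_le q.reverse
      simpa using this
    have h2 : H.dist x v ≤ H.dist x w + 1 := by
      have hrw : H.Reachable x w := ⟨q.reverse⟩
      obtain ⟨r, hrlen⟩ := hrw.exists_walk_length_eq_dist
      have := SimpleGraph.dist_le (r.concat hadj.symm)
      rwa [SimpleGraph.Walk.length_concat, hrlen] at this
    omega

lemma three_endpoints {H : SimpleGraph W} [DecidableRel H.Adj] {x a b : W}
    (hdeg : ∀ v : W, H.degree v ≤ 2)
    (hax : a ≠ x) (hbx : b ≠ x) (hab : a ≠ b)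
    (hnx : H.degree x ≤ 1) (hna : H.degree a ≤ 1) (hnb : H.degree b ≤ 1)
    (hra : H.Reachable x a) (hrb : H.Reachable x b) : False := by
  classical
  set H' : SimpleGraph W :=
    { Adj := fun u v => H.Adj u v ∧ H.Reachable x u ∧ H.Reachable x v
      symm := ⟨by rintro u v ⟨h1, h2, h3⟩; exact ⟨h1.symm, h3, h2⟩⟩
      loopless := ⟨fun v h => H.loopless.irrefl v h.1⟩ } with hH'
  letI : DecidableRel H'.Adj := fun u v => Classical.dec _
  have hsub : ∀ v, H'.neighborFinset v ⊆ H.neighborFinset v := by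
    intro v u hu
    rw [SimpleGraph.mem_neighborFinset] at hu ⊢
    exact hu.1
  have hdeg' : ∀ v, H'.degree v ≤ H.degree v := fun v => Finset.card_le_card (hsub v)
  have hzero : ∀ v, ¬ H.Reachable x v → H'.degree v = 0 := by
    intro v hv
    rw [SimpleGraph.degree, Finset.card_eq_zero, Finset.eq_empty_iff_forall_notMem]
    intro u hu
    rw [SimpleGraph.mem_neighborFinset] at hu
    exact hv hu.2.1
  set ST : Finset W := Finset.univ.filter (fun v => H.Reachable x v) with hST
  have hxST : x ∈ ST := by
    simp only [hST, Finset.mem_filter, Finset.mem_univ, true_and]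
    exact SimpleGraph.Reachable.refl x
  have haST : a ∈ ST := by simp [hST, hra]
  have hbST : b ∈ ST := by simp [hST, hrb]
  set T : Finset W := {x, a, b} with hT
  have hTsub : T ⊆ ST := by
    intro v hv
    simp only [hT, Finset.mem_insert, Finset.mem_singleton] at hv
    rcases hv with rfl | rfl | rfl <;> assumption
  have hTcard : T.card = 3 := by
    rw [hT]
    rw [Finset.card_insert_of_notMem (by simp [Ne.symm hax, Ne.symm hbx]),
      Finset.card_insert_of_notMem (by simp [hab]), Finset.card_singleton]
  -- upper bound on degree sum
  have hsum_eq : ∑ v ∈ ST, H'.degree v = ∑ v, H'.degree v := by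
    apply Finset.sum_subset (Finset.subset_univ ST)
    intro v _ hv
    apply hzero
    simpa [hST] using hv
  have hsumT : ∑ v ∈ T, H'.degree v ≤ 3 := by
    rw [hT, Finset.sum_insert (by simp [Ne.symm hax, Ne.symm hbx]),
      Finset.sum_insert (by simp [hab]), Finset.sum_singleton]
    have := hdeg' x
    have := hdeg' a
    have := hdeg' b
    omega
  have hsumRest : ∑ v ∈ ST \ T, H'.degree v ≤ 2 * (ST.card - 3) := by
    calc ∑ v ∈ ST \ T, H'.degree v ≤ ∑ v ∈ ST \ T, 2 := by
          apply Finset.sum_le_sum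
          intro v _
          exact le_trans (hdeg' v) (hdeg v)
      _ = 2 * (ST.card - 3) := by
          rw [Finset.sum_const, smul_eq_mul, Finset.card_sdiff_of_subset hTsub, hTcard, Nat.mul_comm]
  have hsum_upper : ∑ v, H'.degree v ≤ 3 + 2 * (ST.card - 3) := by
    rw [← hsum_eq, ← Finset.sum_sdiff hTsub]
    omega
  -- lower bound via injection into edges
  have hpred : ∀ v, H.Reachable x v → v ≠ x →
      ∃ w, H.Adj w v ∧ H.dist x w + 1 = H.dist x v := fun v h1 h2 => exists_pred h1 h2
  set f : W → Sym2 W := fun v =>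
    if h : H.Reachable x v ∧ v ≠ x then s(Classical.choose (exists_pred h.1 h.2), v)
    else s(v, v) with hf
  have hinj : Finset.card (ST.erase x) ≤ H'.edgeFinset.card := by
    apply Finset.card_le_card_of_injOn f
    · intro v hv
      rw [Finset.mem_coe, Finset.mem_erase] at hv
      have hv1 : H.Reachable x v := by simpa [hST] using hv.2
      have h : H.Reachable x v ∧ v ≠ x := ⟨hv1, hv.1⟩
      have hspec := Classical.choose_spec (exists_pred h.1 h.2)
      rw [Finset.mem_coe, SimpleGraph.mem_edgeFinset]
      have hfv : f v = s(Classical.choose (exists_pred h.1 h.2), v) := by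
        rw [hf]; exact dif_pos h
      rw [hfv, SimpleGraph.mem_edgeSet]
      exact ⟨hspec.1, hv1.trans hspec.1.symm.reachable, hv1⟩
    · intro v hv v' hv' heq
      rw [Finset.coe_erase, Set.mem_diff] at hv hv'
      have hv1 : H.Reachable x v := by
        have := hv.1; simp only [hST, Finset.coe_filter, Set.mem_setOf_eq] at this
        exact this.2
      have hv1' : H.Reachable x v' := by
        have := hv'.1; simp only [hST, Finset.coe_filter, Set.mem_setOf_eq] at this
        exact this.2
      have hvx : v ≠ x := by simpa using hv.2
      have hvx' : v' ≠ x := by simpa using hv'.2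
      have h : H.Reachable x v ∧ v ≠ x := ⟨hv1, hvx⟩
      have h' : H.Reachable x v' ∧ v' ≠ x := ⟨hv1', hvx'⟩
      have hspec := Classical.choose_spec (exists_pred h.1 h.2)
      have hspec' := Classical.choose_spec (exists_pred h'.1 h'.2)
      rw [hf] at heq
      simp only [dif_pos h, dif_pos h'] at heq
      rcases Sym2.eq_iff.mp heq with ⟨h1, h2⟩ | ⟨h1, h2⟩
      · exact h2
      · exfalso
        have e1 : H.dist x (Classical.choose (exists_pred h.1 h.2)) + 1 = H.dist x v :=
          hspec.2
        have e2 : H.dist x (Classical.choose (exists_pred h'.1 h'.2)) + 1 = H.dist x v' :=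
          hspec'.2
        rw [h1] at e1
        rw [← h2] at e2
        omega
  have hcard_erase : ST.card - 1 ≤ H'.edgeFinset.card := by
    rw [Finset.card_erase_of_mem hxST] at hinj
    exact hinj
  have hhand := SimpleGraph.sum_degrees_eq_twice_card_edges H'
  have hST3 : 3 ≤ ST.card := by
    calc 3 = T.card := hTcard.symm
      _ ≤ ST.card := Finset.card_le_card hTsub
  omega

end Vizing5

section Vizing6
variable {W : Type*} [Fintype W] [DecidableEq W]
variable {G : SimpleGraph W} [DecidableRel G.Adj] {N : ℕ} {x : W}

lemma master' (l : List W) (hne : l ≠ []) (c : Sym2 W → Fin N)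
    (hfan : IsFan G N x c l) (hP : ProperExc G N x c (l.head hne)) (γ : Fin N)
    (h1 : γ ∈ FreeX G N x c (l.head hne)) (h2 : γ ∈ Free0 G N x c (l.getLast hne)) :
    ∃ cc, ProperAll G N cc := by
  rcases l with _ | ⟨z, rest⟩
  · exact absurd rfl hne
  · exact master_lemma rest c z hfan hP γ h1 h2

lemma mem_split_pred {v : W} : ∀ (a : W) (l : List W), v ∈ a :: l → v ≠ a →
    ∃ A p B, a :: l = A ++ p :: v :: B := by
  intro a l
  induction l generalizing a with
  | nil =>
    intro hv hva
    simp only [List.mem_singleton] at hv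
    exact absurd hv hva
  | cons b t ih =>
    intro hv hva
    by_cases hvb : v = b
    · exact ⟨[], a, t, by rw [hvb]; rfl⟩
    · have hvmem : v ∈ b :: t := by
        rcases List.mem_cons.mp hv with h | h
        · exact absurd h hva
        · exact h
      obtain ⟨A, p, B, hh⟩ := ih b hvmem hvb
      exact ⟨a :: A, p, B, by rw [List.cons_append, ← hh]⟩

/-- degree bound via colors -/
lemma deg_le_of_colors {H : SimpleGraph W} [DecidableRel H.Adj] {v : W}
    (T : Finset (Fin N)) (f : W → Fin N)
    (hmaps : ∀ u, H.Adj v u → f u ∈ T)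
    (hinj : ∀ u u', H.Adj v u → H.Adj v u' → f u = f u' → u = u') :
    H.degree v ≤ T.card := by
  apply Finset.card_le_card_of_injOn f
  · intro u hu
    exact hmaps u ((SimpleGraph.mem_neighborFinset _ _ _).mp hu)
  · intro u hu u' hu' heq
    rw [Finset.mem_coe, SimpleGraph.mem_neighborFinset] at hu hu'
    exact hinj u u' hu hu' heq

lemma swapCol_beta (α β : Fin N) : swapCol α β β = α := by
  unfold swapCol
  by_cases h : β = α
  · rw [if_pos h, h]
  · rw [if_neg h, if_pos rfl]

end Vizing6

section Vizing7
variable {W : Type*} [Fintype W] [DecidableEq W]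
variable {G : SimpleGraph W} [DecidableRel G.Adj] {N : ℕ} {x : W}

lemma ext_rec (hdeg : ∀ v : W, G.degree v < N) {y₀ : W} (hxy : G.Adj x y₀)
    {c₀ : Sym2 W → Fin N} (hP : ProperExc G N x c₀ y₀) :
    ∀ m : ℕ, ∀ rest : List W, IsFan G N x c₀ (y₀ :: rest) →
      (G.neighborFinset x \ (y₀ :: rest).toFinset).card ≤ m → ∃ cc, ProperAll G N cc := by
  intro m
  induction m using Nat.strong_induction_on with
  | _ m ih =>
  intro rest hfan hmeas
  have hnd0 : (y₀ :: rest).Nodup := hfan.1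
  have hadjL : ∀ z ∈ y₀ :: rest, G.Adj x z := hfan.2.1
  have hch : (y₀ :: rest).Chain' (fun z w => c₀ s(x, w) ∈ Free0 G N x c₀ z) := hfan.2.2
  have hLne : (y₀ :: rest) ≠ [] := List.cons_ne_nil _ _
  set u := (y₀ :: rest).getLast hLne with hu
  have huL : u ∈ y₀ :: rest := List.getLast_mem hLne
  have hxu : G.Adj x u := hadjL u huL
  have hny₀rest : y₀ ∉ rest := (List.nodup_cons.mp hnd0).1
  -- pick β
  have hβex : ((Free0 G N x c₀ u).erase (c₀ s(x, u))).Nonempty := by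
    rw [← Finset.card_pos]
    have h1 := Free0_card_ge (c := c₀) hxu.symm
    have h2 : G.degree u < N := hdeg u
    have h3 : 0 < G.degree u := (G.degree_pos_iff_exists_adj u).mpr ⟨x, hxu.symm⟩
    have h4 := Finset.pred_card_le_card_erase
      (s := Free0 G N x c₀ u) (a := c₀ s(x, u))
    omega
  obtain ⟨β, hβ⟩ := hβex
  have hβu : β ∈ Free0 G N x c₀ u := Finset.mem_of_mem_erase hβ
  have hβne : β ≠ c₀ s(x, u) := Finset.ne_of_mem_erase hβ
  by_cases hβx : β ∈ FreeX G N x c₀ y₀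
  · exact master' (y₀ :: rest) hLne c₀ hfan hP β hβx hβu
  -- get v : the β-colored edge at x
  have hv : ∃ v, G.Adj x v ∧ v ≠ y₀ ∧ c₀ s(x, v) = β := by
    by_contra hcon
    push_neg at hcon
    exact hβx (mem_FreeX.mpr (fun u' h1 h2 => hcon u' h1 h2))
  obtain ⟨v, hxv, hvy₀, hvcol⟩ := hv
  by_cases hvL : v ∈ y₀ :: rest
  case neg =>
    -- extend the fan
    have hfan' : IsFan G N x c₀ ((y₀ :: rest) ++ [v]) := by
      refine ⟨?_, ?_, ?_⟩
      · rw [List.nodup_append']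
        refine ⟨hnd0, List.nodup_singleton v, ?_⟩
        intro a ha hb
        rw [List.mem_singleton] at hb
        subst hb
        exact hvL ha
      · intro z hz
        rcases List.mem_append.mp hz with h | h
        · exact hadjL z h
        · rw [List.mem_singleton] at h; subst h; exact hxv
      · refine List.IsChain.append hch (List.isChain_singleton v) ?_
        intro a ha b hb
        rw [List.getLast?_eq_getLast hLne, Option.mem_some_iff] at ha
        rw [List.head?_cons, Option.mem_some_iff] at hb
        subst ha; subst hb
        rw [hvcol]
        exact hβu
    have hvmem : v ∈ G.neighborFinset x \ (y₀ :: rest).toFinset := by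
      rw [Finset.mem_sdiff, SimpleGraph.mem_neighborFinset]
      exact ⟨hxv, fun hc => hvL (List.mem_toFinset.mp hc)⟩
    have hss : G.neighborFinset x \ ((y₀ :: rest) ++ [v]).toFinset ⊂
        G.neighborFinset x \ (y₀ :: rest).toFinset := by
      constructor
      · intro a ha
        rw [Finset.mem_sdiff] at ha ⊢
        refine ⟨ha.1, fun hc => ha.2 ?_⟩
        rw [List.toFinset_append]
        exact Finset.mem_union_left _ hc
      · intro hcon
        have := hcon hvmem
        rw [Finset.mem_sdiff, List.toFinset_append] at this
        exact this.2 (Finset.mem_union_right _ (by simp))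
    have hm1 : (G.neighborFinset x \ ((y₀ :: rest) ++ [v]).toFinset).card < m :=
      lt_of_lt_of_le (Finset.card_lt_card hss) hmeas
    exact ih _ hm1 (rest ++ [v]) hfan' (le_refl _)
  case pos =>
    -- Kempe endgame
    obtain ⟨A, p, B, hdecomp⟩ := mem_split_pred y₀ rest hvL hvy₀
    have hdecomp' : y₀ :: rest = (A ++ [p]) ++ (v :: B) := by
      rw [hdecomp]; simp
    have hAPne : A ++ [p] ≠ [] := by simp
    have hpL : p ∈ y₀ :: rest := by rw [hdecomp]; simp
    have hxp : G.Adj x p := hadjL p hpL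
    have hpx : p ≠ x := hxp.ne'
    have hvx : v ≠ x := hxv.ne'
    have hux : u ≠ x := hxu.ne'
    have hvu : v ≠ u := by
      intro h
      apply hβne
      rw [← h]
      exact hvcol.symm
    have hndsplit : (A ++ [p]).Nodup ∧ (v :: B).Nodup ∧ (A ++ [p]).Disjoint (v :: B) := by
      rw [← List.nodup_append']
      rw [← hdecomp']
      exact hnd0
    have hu_in : u ∈ v :: B := by
      have hgl : (y₀ :: rest).getLast hLne = (v :: B).getLast (List.cons_ne_nil _ _) := by
        simp only [hdecomp']
        exact List.getLast_append_of_ne_nil _ (List.cons_ne_nil _ _)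
      rw [hu, hgl]
      exact List.getLast_mem _
    have hpu : p ≠ u := by
      intro h
      exact hndsplit.2.2 (by simp : p ∈ A ++ [p]) (h ▸ hu_in)
    have hpv : p ≠ v := by
      intro h
      exact hndsplit.2.2 (by simp : p ∈ A ++ [p]) (h ▸ (by simp : v ∈ v :: B))
    have hheadAP : (A ++ [p]).head hAPne = y₀ := by
      have h1 : ((A ++ [p]) ++ (v :: B)).head? = (A ++ [p]).head? :=
        List.head?_append_of_ne_nil _ hAPne
      rw [← hdecomp', List.head?_cons] at h1
      have h2 := List.head?_eq_head (l := A ++ [p]) hAPne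
      rw [h2] at h1
      exact (Option.some_inj.mp h1).symm
    have hy₀AP : y₀ ∈ A ++ [p] := by
      rw [← hheadAP]
      exact List.head_mem hAPne
    have huy₀ : u ≠ y₀ := by
      intro h
      exact hndsplit.2.2 hy₀AP (h ▸ hu_in)
    have hch2 : ((A ++ [p]) ++ (v :: B)).Chain'
        (fun z w => c₀ s(x, w) ∈ Free0 G N x c₀ z) := by
      rw [← hdecomp']; exact hch
    have hchAP := (List.isChain_append.mp hch2).1
    have hchvB := (List.isChain_append.mp hch2).2.1
    have hβp : β ∈ Free0 G N x c₀ p := by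
      have hj := (List.isChain_append.mp hch2).2.2 p
        (by rw [List.getLast?_concat]; rfl) v (by rw [List.head?_cons]; rfl)
      rwa [hvcol] at hj
    -- pick α
    have hαex : (FreeX G N x c₀ y₀).Nonempty := by
      rw [← Finset.card_pos]
      have h1 := FreeX_card_ge (c := c₀) hxy
      have h2 : G.degree x < N := hdeg x
      have h3 : 0 < G.degree x := (G.degree_pos_iff_exists_adj x).mpr ⟨y₀, hxy⟩
      omega
    obtain ⟨α, hαx⟩ := hαex
    have hαβ : α ≠ β := fun h => hβx (h ▸ hαx)
    by_cases hαu : α ∈ Free0 G N x c₀ u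
    · exact master' (y₀ :: rest) hLne c₀ hfan hP α hαx hαu
    by_cases hαp : α ∈ Free0 G N x c₀ p
    · -- rotate only to p and use α there
      have hfanAP : IsFan G N x c₀ (A ++ [p]) := by
        refine ⟨hndsplit.1, ?_, hchAP⟩
        intro z hz
        exact hadjL z (by rw [hdecomp']; exact List.mem_append_left _ hz)
      have hgl : (A ++ [p]).getLast hAPne = p := List.getLast_concat
      refine master' (A ++ [p]) hAPne c₀ hfanAP ?_ α ?_ ?_
      · rw [hheadAP]; exact hP
      · rw [hheadAP]; exact hαx
      · rw [hgl]; exact hαp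
    -- the swap
    set Hg := HG G N x c₀ y₀ α β with hHg
    letI : DecidableRel Hg.Adj := fun a b => Classical.dec _
    set c₁ := kswap G N x c₀ y₀ α β with hc₁
    have hxcol : ∀ w', G.Adj x w' → w' ≠ y₀ → c₀ s(x, w') ≠ α := mem_FreeX.mp hαx
    have hxcolβ : ∀ w', G.Adj x w' → w' ≠ y₀ → c₀ s(x, w') = β → w' = v := by
      intro w' h1 h2 h3
      exact hP h1 hxv (sxz_ne_sxw h2) (sxz_ne_sxw hvy₀) (h3.trans hvcol.symm)
    have hdeg2 : ∀ w', Hg.degree w' ≤ 2 := by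
      intro w'
      have hc2 : ({α, β} : Finset (Fin N)).card ≤ 2 :=
        le_trans (Finset.card_insert_le _ _) (by simp)
      refine le_trans (deg_le_of_colors {α, β} (fun u' => c₀ s(w', u')) ?_ ?_) hc2
      · intro u' hu'
        rcases hu'.2.2 with h | h <;> simp [h]
      · intro u1 u2 h1 h2 heq
        exact hP h1.1 h2.1 h1.2.1 h2.2.1 heq
    have hdx : Hg.degree x ≤ 1 := by
      refine le_trans (deg_le_of_colors {β} (fun u' => c₀ s(x, u')) ?_ ?_) (by simp)
      · intro u' hu'
        have hne' : u' ≠ y₀ := fun h => hu'.2.1 (by rw [h])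
        rcases hu'.2.2 with h | h
        · exact absurd h (hxcol u' hu'.1 hne')
        · simp [h]
      · intro u1 u2 h1 h2 heq
        exact hP h1.1 h2.1 h1.2.1 h2.2.1 heq
    have hdp : Hg.degree p ≤ 1 := by
      refine le_trans (deg_le_of_colors {α} (fun u' => c₀ s(p, u')) ?_ ?_) (by simp)
      · intro u' hu'
        have hux' : u' ≠ x := by
          intro hh
          rw [hh] at hu'
          by_cases hpy : p = y₀
          · apply hu'.2.1
            rw [hpy, Sym2.eq_swap]
          · rcases hu'.2.2 with h | h
            · exact hxcol p hxp hpy (by rwa [Sym2.eq_swap] at h)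
            · exact hpv (hxcolβ p hxp hpy (by rwa [Sym2.eq_swap] at h))
        rcases hu'.2.2 with h | h
        · simp [h]
        · exact absurd h (mem_Free0.mp hβp u' hu'.1 hux')
      · intro u1 u2 h1 h2 heq
        exact hP h1.1 h2.1 h1.2.1 h2.2.1 heq
    have hdu : Hg.degree u ≤ 1 := by
      refine le_trans (deg_le_of_colors {α} (fun u' => c₀ s(u, u')) ?_ ?_) (by simp)
      · intro u' hu'
        have hux' : u' ≠ x := by
          intro hh
          rw [hh] at hu'
          rcases hu'.2.2 with h | h
          · exact hxcol u hxu huy₀ (by rwa [Sym2.eq_swap] at h)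
          · exact hvu ((hxcolβ u hxu huy₀ (by rwa [Sym2.eq_swap] at h)).symm ▸ rfl)
        rcases hu'.2.2 with h | h
        · simp [h]
        · exact absurd h (mem_Free0.mp hβu u' hu'.1 hux')
      · intro u1 u2 h1 h2 heq
        exact hP h1.1 h2.1 h1.2.1 h2.2.1 heq
    -- color preservation facts
    have hckeep : ∀ w', G.Adj x w' → w' ≠ y₀ → w' ≠ v → c₁ s(x, w') = c₀ s(x, w') := by
      intro w' h1 h2 h3
      rw [hc₁, kswap_mem x_mem_SS h1 (sxz_ne_sxw h2)]
      exact swapCol_eq_self (hxcol w' h1 h2) (fun h => h3 (hxcolβ w' h1 h2 h))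
    have hcv : c₁ s(x, v) = α := by
      rw [hc₁, kswap_mem x_mem_SS hxv (sxz_ne_sxw hvy₀), hvcol, swapCol_beta]
    have htrans : ∀ ll : List W,
        ll.Chain' (fun z w => c₀ s(x, w) ∈ Free0 G N x c₀ z) →
        (∀ z ∈ ll, G.Adj x z) → (∀ w' ∈ ll.tail, w' ≠ v ∧ w' ≠ y₀) →
        ll.Chain' (fun z w => c₁ s(x, w) ∈ Free0 G N x c₁ z) := by
      intro ll hcl hadj' htl
      refine chain'_transform hcl ?_
      intro z w hz hw hf
      have hxw : G.Adj x w := hadj' w (List.mem_of_mem_tail hw)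
      obtain ⟨hwv, hwy⟩ := htl w hw
      rw [hckeep w hxw hwy hwv]
      exact (kswap_Free0_other (hxcol w hxw hwy)
        (fun h => hwv (hxcolβ w hxw hwy h)) (hadj' z hz).ne').mpr hf
    have htailAP : ∀ w', w' ∈ (A ++ [p]).tail → w' ≠ v ∧ w' ≠ y₀ := by
      intro w' hw
      have hwAP : w' ∈ A ++ [p] := List.mem_of_mem_tail hw
      constructor
      · intro h
        exact hndsplit.2.2 hwAP (h ▸ (by simp : v ∈ v :: B))
      · intro h
        subst h
        have hhd : (A ++ [p]).head hAPne ∉ (A ++ [p]).tail := by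
          have hnod := hndsplit.1
          conv at hnod => rw [← List.cons_head_tail hAPne]
          exact (List.nodup_cons.mp hnod).1
        rw [hheadAP] at hhd
        exact hhd hw
    have htailvB : ∀ w', w' ∈ (v :: B).tail → w' ≠ v ∧ w' ≠ y₀ := by
      intro w' hw
      rw [List.tail_cons] at hw
      constructor
      · intro h
        have := (List.nodup_cons.mp hndsplit.2.1).1
        rw [← h] at this
        exact this hw
      · intro h
        subst h
        exact hndsplit.2.2 hy₀AP (List.mem_cons_of_mem _ hw)
    have hadjAP : ∀ z ∈ A ++ [p], G.Adj x z := by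
      intro z hz
      exact hadjL z (by rw [hdecomp']; exact List.mem_append_left _ hz)
    have hadjvB : ∀ z ∈ v :: B, G.Adj x z := by
      intro z hz
      exact hadjL z (by rw [hdecomp']; exact List.mem_append_right _ hz)
    have hβFreeX1 : β ∈ FreeX G N x c₁ y₀ := by
      have := kswap_FreeX_mem (α := α) (β := β) (z := y₀) (c := c₀) hαx
      rwa [swapCol_alpha] at this
    have hP1 : ProperExc G N x c₁ y₀ := kswap_proper hP
    by_cases hpS : p ∈ SS G N x c₀ y₀ α β
    · -- B2 : full fan with c₁
      have huS : u ∉ SS G N x c₀ y₀ α β := by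
        intro hcon
        exact three_endpoints hdeg2 hpx hux hpu hdx hdp hdu hpS hcon
      have hjunc : c₁ s(x, v) ∈ Free0 G N x c₁ p := by
        rw [hcv]
        have := kswap_Free0_mem (α := α) (β := β) hpS hpx hβp
        rwa [swapCol_beta] at this
      have hfan1 : IsFan G N x c₁ (y₀ :: rest) := by
        refine ⟨hnd0, hadjL, ?_⟩
        rw [hdecomp']
        refine List.IsChain.append (htrans _ hchAP hadjAP htailAP)
          (htrans _ hchvB hadjvB htailvB) ?_
        intro a ha b hb
        rw [List.getLast?_concat, Option.mem_some_iff] at ha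
        rw [List.head?_cons, Option.mem_some_iff] at hb
        subst ha; subst hb
        exact hjunc
      refine master' (y₀ :: rest) hLne c₁ hfan1 hP1 β hβFreeX1 ?_
      rw [← hu, hc₁, kswap_Free0_not_mem huS hux]
      exact hβu
    · -- B1 : prefix fan with c₁
      have hfanAP : IsFan G N x c₁ (A ++ [p]) :=
        ⟨hndsplit.1, hadjAP, htrans _ hchAP hadjAP htailAP⟩
      have hgl : (A ++ [p]).getLast hAPne = p := List.getLast_concat
      refine master' (A ++ [p]) hAPne c₁ hfanAP ?_ β ?_ ?_
      · rw [hheadAP]; exact hP1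
      · rw [hheadAP]; exact hβFreeX1
      · rw [hgl, hc₁, kswap_Free0_not_mem hpS hpx]
        exact hβp

end Vizing7

section Vizing8
variable {W : Type*} [Fintype W] [DecidableEq W]

lemma vizing_aux (N : ℕ) (hN : 0 < N) : ∀ n : ℕ, ∀ G : SimpleGraph W,
    ∀ (instG : DecidableRel G.Adj), (∀ v, G.degree v < N) → G.edgeFinset.card ≤ n →
    ∃ c, ProperAll G N c := by
  intro n
  induction n using Nat.strong_induction_on with
  | _ n ih =>
  intro G instG hdeg hcard
  by_cases hE : G.edgeFinset = ∅
  · have hno : ∀ v u : W, ¬ G.Adj v u := by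
      intro v u h
      have hmem : s(v, u) ∈ G.edgeFinset := SimpleGraph.mem_edgeFinset.mpr h
      rw [hE] at hmem
      exact absurd hmem (Finset.notMem_empty _)
    exact ⟨fun _ => ⟨0, hN⟩, fun v u u' h _ _ => absurd h (hno v u)⟩
  · obtain ⟨e, he⟩ := Finset.nonempty_iff_ne_empty.mpr hE
    revert he
    induction e using Sym2.ind with | _ x y₀ =>
    intro he
    have hxy : G.Adj x y₀ := SimpleGraph.mem_edgeFinset.mp he
    set G' := G.deleteEdges {s(x, y₀)} with hG'
    letI instG' : DecidableRel G'.Adj := fun a b => Classical.dec _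
    have hG'le : ∀ v u : W, G'.Adj v u → G.Adj v u := by
      intro v u h
      rw [hG', SimpleGraph.deleteEdges_adj] at h
      exact h.1
    have hdeg' : ∀ v, G'.degree v < N := by
      intro v
      refine lt_of_le_of_lt (Finset.card_le_card ?_) (hdeg v)
      intro a ha
      rw [SimpleGraph.mem_neighborFinset] at ha ⊢
      exact hG'le v a ha
    have hsub : G'.edgeFinset ⊆ G.edgeFinset.erase s(x, y₀) := by
      intro f hf
      rw [SimpleGraph.mem_edgeFinset, hG', SimpleGraph.edgeSet_deleteEdges,
        Set.mem_diff] at hf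
      rw [Finset.mem_erase, SimpleGraph.mem_edgeFinset]
      exact ⟨by simpa using hf.2, hf.1⟩
    have hcard' : G'.edgeFinset.card < n := by
      have h1 := Finset.card_le_card hsub
      have h2 : (G.edgeFinset.erase s(x, y₀)).card + 1 = G.edgeFinset.card :=
        Finset.card_erase_add_one he
      omega
    obtain ⟨c', hc'⟩ := ih G'.edgeFinset.card hcard' G' instG' hdeg' (le_refl _)
    have hPE : ProperExc G N x c' y₀ := by
      intro v u u' h1 h2 hne1 hne2 heq
      refine hc' ?_ ?_ heq
      · rw [hG', SimpleGraph.deleteEdges_adj]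
        exact ⟨h1, by simpa using hne1⟩
      · rw [hG', SimpleGraph.deleteEdges_adj]
        exact ⟨h2, by simpa using hne2⟩
    have hfan0 : IsFan G N x c' [y₀] := by
      refine ⟨List.nodup_singleton _, ?_, List.isChain_singleton _⟩
      intro z hz
      rw [List.mem_singleton] at hz
      subst hz
      exact hxy
    exact ext_rec hdeg hxy hPE _ [] hfan0 (le_refl _)

/-- Vizing-type theorem: proper edge coloring when all degrees are `< N`. -/
theorem vizing_exists {W : Type*} [Fintype W] (G : SimpleGraph W) (N : ℕ) (hN : 0 < N)
    (hdeg : ∀ v, (G.neighborSet v).ncard < N) :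
    ∃ c : Sym2 W → Fin N,
      ∀ ⦃v u u'⦄, G.Adj v u → G.Adj v u' → c s(v, u) = c s(v, u') → u = u' := by
  letI : DecidableEq W := Classical.decEq W
  letI instG : DecidableRel G.Adj := fun a b => Classical.dec _
  have hdeg' : ∀ v, G.degree v < N := by
    intro v
    have h1 : G.degree v = (G.neighborSet v).ncard := by
      unfold SimpleGraph.degree
      rw [SimpleGraph.neighborFinset_def, ← Set.ncard_eq_toFinset_card']
    rw [h1]
    exact hdeg v
  obtain ⟨c, hc⟩ := vizing_aux N hN G.edgeFinset.card G instG hdeg' (le_refl _)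
  exact ⟨c, hc⟩

end Vizing8

section Reduction
variable {V : Type*}

def lowv (G : SimpleGraph V) (rk : ℕ) (v : V) : Prop := (G.neighborSet v).ncard ≤ rk - 1

def starAdj (G : SimpleGraph V) (rk : ℕ) : (V ⊕ (V × V)) → (V ⊕ (V × V)) → Prop
  | Sum.inl u, Sum.inl w => G.Adj u w ∧ lowv G rk u ∧ lowv G rk w
  | Sum.inl u, Sum.inr p => p.1 = u ∧ G.Adj p.1 p.2 ∧ lowv G rk p.1 ∧ ¬ lowv G rk p.2
  | Sum.inr p, Sum.inl u => p.1 = u ∧ G.Adj p.1 p.2 ∧ lowv G rk p.1 ∧ ¬ lowv G rk p.2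
  | Sum.inr _, Sum.inr _ => False

def Gstar (G : SimpleGraph V) (rk : ℕ) : SimpleGraph (V ⊕ (V × V)) where
  Adj := starAdj G rk
  symm := by
    constructor
    intro a b h
    match a, b, h with
    | Sum.inl u, Sum.inl w, h => exact ⟨h.1.symm, h.2.2, h.2.1⟩
    | Sum.inl u, Sum.inr p, h => exact h
    | Sum.inr p, Sum.inl u, h => exact h
  loopless := by
    constructor
    intro a h
    match a, h with
    | Sum.inl u, h => exact G.loopless.irrefl u h.1
    | Sum.inr p, h => exact h

lemma Gstar_deg [Fintype V] (G : SimpleGraph V) (rk : ℕ) (hrk : 1 ≤ rk) :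
    ∀ w, ((Gstar G rk).neighborSet w).ncard < rk := by
  intro w
  cases w with
  | inl u =>
    by_cases hl : lowv G rk u
    · have hinj : Set.InjOn (Sum.elim id Prod.snd)
          ((Gstar G rk).neighborSet (Sum.inl u)) := by
        intro b hb b' hb' heq
        match b, b', hb, hb', heq with
        | Sum.inl w, Sum.inl w', hb, hb', heq => simpa using heq
        | Sum.inl w, Sum.inr p, hb, hb', heq =>
          exfalso
          have h1 : lowv G rk w := hb.2.2
          have h2 : ¬ lowv G rk p.2 := hb'.2.2.2
          simp only [Sum.elim_inl, Sum.elim_inr, id_eq] at heq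
          rw [heq] at h1
          exact h2 h1
        | Sum.inr p, Sum.inl w, hb, hb', heq =>
          exfalso
          have h1 : lowv G rk w := hb'.2.2
          have h2 : ¬ lowv G rk p.2 := hb.2.2.2
          simp only [Sum.elim_inl, Sum.elim_inr, id_eq] at heq
          rw [← heq] at h1
          exact h2 h1
        | Sum.inr p, Sum.inr q, hb, hb', heq =>
          simp only [Sum.elim_inr] at heq
          have h1 : p.1 = u := hb.1
          have h2 : q.1 = u := hb'.1
          rw [Sum.inr.injEq]
          exact Prod.ext (h1.trans h2.symm) heq
      have hmaps : (Sum.elim id Prod.snd) '' ((Gstar G rk).neighborSet (Sum.inl u)) ⊆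
          G.neighborSet u := by
        rintro b ⟨a, ha, rfl⟩
        match a, ha with
        | Sum.inl w, ha => exact ha.1
        | Sum.inr p, ha =>
          have := ha.2.1
          rw [ha.1] at this
          exact this
      calc ((Gstar G rk).neighborSet (Sum.inl u)).ncard
          = ((Sum.elim id Prod.snd) '' ((Gstar G rk).neighborSet (Sum.inl u))).ncard :=
            (Set.ncard_image_of_injOn hinj).symm
        _ ≤ (G.neighborSet u).ncard := Set.ncard_le_ncard hmaps (Set.toFinite _)
        _ ≤ rk - 1 := hl
        _ < rk := by omega
    · have hempty : (Gstar G rk).neighborSet (Sum.inl u) = ∅ := by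
        ext b
        simp only [SimpleGraph.mem_neighborSet, Set.mem_empty_iff_false, iff_false]
        intro hb
        match b, hb with
        | Sum.inl w, hb => exact hl hb.2.1
        | Sum.inr p, hb => exact hl (hb.1 ▸ hb.2.2.1)
      rw [hempty]
      rw [Set.ncard_empty]; omega
  | inr p =>
    have hsub : (Gstar G rk).neighborSet (Sum.inr p) ⊆ {Sum.inl p.1} := by
      intro b hb
      match b, hb with
      | Sum.inl w, hb =>
        rw [Set.mem_singleton_iff, Sum.inl.injEq]
        exact hb.1.symm
      | Sum.inr q, hb => exact absurd hb id
    rcases Set.eq_empty_or_nonempty ((Gstar G rk).neighborSet (Sum.inr p)) with he | hne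
    · rw [he]; rw [Set.ncard_empty]; omega
    · obtain ⟨b, hb⟩ := hne
      have hbeq : b = Sum.inl p.1 := hsub hb
      rw [hbeq] at hb
      have hlow : lowv G rk p.1 := hb.2.2.1
      have hadjp : G.Adj p.1 p.2 := hb.2.1
      have h1 : 0 < (G.neighborSet p.1).ncard := by
        rw [Set.ncard_pos (Set.toFinite _)]
        exact ⟨p.2, hadjp⟩
      have h2 : 2 ≤ rk := by
        have := hlow
        unfold lowv at this
        omega
      have h3 : ((Gstar G rk).neighborSet (Sum.inr p)).ncard ≤ 1 := by
        calc ((Gstar G rk).neighborSet (Sum.inr p)).ncard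
            ≤ ({Sum.inl p.1} : Set (V ⊕ (V × V))).ncard :=
              Set.ncard_le_ncard hsub (Set.toFinite _)
          _ = 1 := Set.ncard_singleton _
      omega

end Reduction

open Classical in
theorem stmt_0' {V : Type*} [Fintype V] (G : SimpleGraph V) (r k : ℕ)
    (hr : 1 ≤ r) (hk : 1 ≤ k) :
    ∃ c : Sym2 V → Fin r,
      ∀ v : V, (G.neighborSet v).ncard ≤ r * k - 1 →
        ∀ i : Fin r, {u | G.Adj v u ∧ c s(v, u) = i}.ncard ≤ k := by
  set rk := r * k with hrkdef
  have hrk : 1 ≤ rk := Nat.one_le_iff_ne_zero.mpr (by positivity)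
  have hk0 : 0 < k := hk
  obtain ⟨cs, hcs⟩ := vizing_exists (Gstar G rk) rk hrk (Gstar_deg G rk hrk)
  set grp : Fin rk → Fin r := fun m =>
    ⟨m.val / k, by
      have hmlt := m.isLt
      rw [Nat.div_lt_iff_lt_mul hk0]
      exact hmlt⟩ with hgrp
  set eOf : V → V → Sym2 (V ⊕ (V × V)) := fun u w =>
    if lowv G rk u ∧ lowv G rk w then s(Sum.inl u, Sum.inl w)
    else if lowv G rk u then s(Sum.inl u, Sum.inr (u, w))
    else if lowv G rk w then s(Sum.inl w, Sum.inr (w, u))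
    else s(Sum.inl u, Sum.inl w) with heOf
  have hsymm : ∀ u w, grp (cs (eOf u w)) = grp (cs (eOf w u)) := by
    intro u w
    have : eOf u w = eOf w u := by
      rw [heOf]
      by_cases h1 : lowv G rk u <;> by_cases h2 : lowv G rk w
      · simp only [if_pos (And.intro h1 h2), if_pos (And.intro h2 h1)]
        rw [Sym2.eq_swap]
      · simp only [if_neg (fun hh : _ ∧ _ => h2 hh.2), if_pos h1,
          if_neg (fun hh : _ ∧ _ => h2 hh.1), if_neg h2, if_pos h1]
      · simp only [if_neg (fun hh : _ ∧ _ => h1 hh.1), if_neg h1, if_pos h2,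
          if_neg (fun hh : _ ∧ _ => h1 hh.2)]
      · simp only [if_neg (fun hh : _ ∧ _ => h1 hh.1), if_neg h1,
          if_neg (fun hh : _ ∧ _ => h2 hh.1), if_neg h2]
        rw [Sym2.eq_swap]
    rw [this]
  refine ⟨Sym2.lift ⟨fun u w => grp (cs (eOf u w)), hsymm⟩, ?_⟩
  intro v hdegv i
  have hlowv : lowv G rk v := hdegv
  have heOfv : ∀ u, eOf v u =
      if lowv G rk u then s(Sum.inl v, Sum.inl u) else s(Sum.inl v, Sum.inr (v, u)) := by
    intro u
    simp only [heOf]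
    by_cases h : lowv G rk u
    · rw [if_pos (And.intro hlowv h), if_pos h]
    · rw [if_neg (fun hh : _ ∧ _ => h hh.2), if_pos hlowv, if_neg h]
  set A := {u | G.Adj v u ∧
    Sym2.lift ⟨fun u w => grp (cs (eOf u w)), hsymm⟩ s(v, u) = i} with hA
  set ψ : V → Fin rk := fun u => cs (eOf v u) with hψ
  have hmemA : ∀ u ∈ A, G.Adj v u ∧ grp (ψ u) = i := by
    intro u hu
    exact ⟨hu.1, hu.2⟩
  -- adjacency in the star graph
  have hadjstar : ∀ u, G.Adj v u → lowv G rk u →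
      (Gstar G rk).Adj (Sum.inl v) (Sum.inl u) := by
    intro u h hl
    exact ⟨h, hlowv, hl⟩
  have hadjstar' : ∀ u, G.Adj v u → ¬ lowv G rk u →
      (Gstar G rk).Adj (Sum.inl v) (Sum.inr (v, u)) := by
    intro u h hl
    exact ⟨rfl, h, hlowv, hl⟩
  have hinj : Set.InjOn ψ A := by
    intro u hu u' hu' heq
    have h1 : G.Adj v u := (hmemA u hu).1
    have h2 : G.Adj v u' := (hmemA u' hu').1
    rw [hψ] at heq
    simp only at heq
    by_cases hl : lowv G rk u <;> by_cases hl' : lowv G rk u'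
    · rw [heOfv u, heOfv u', if_pos hl, if_pos hl'] at heq
      have := hcs (hadjstar u h1 hl) (hadjstar u' h2 hl') heq
      exact Sum.inl_injective this
    · rw [heOfv u, heOfv u', if_pos hl, if_neg hl'] at heq
      have := hcs (hadjstar u h1 hl) (hadjstar' u' h2 hl') heq
      exact absurd this (by simp)
    · rw [heOfv u, heOfv u', if_neg hl, if_pos hl'] at heq
      have := hcs (hadjstar' u h1 hl) (hadjstar u' h2 hl') heq
      exact absurd this (by simp)
    · rw [heOfv u, heOfv u', if_neg hl, if_neg hl'] at heq
      have := hcs (hadjstar' u h1 hl) (hadjstar' u' h2 hl') heq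
      have := Sum.inr_injective this
      exact (Prod.mk.injEq _ _ _ _).mp this |>.2
  set Bfib := {m : Fin rk | grp m = i} with hB
  have himg : ψ '' A ⊆ Bfib := by
    rintro m ⟨u, hu, rfl⟩
    exact (hmemA u hu).2
  have hBcard : Bfib.ncard ≤ k := by
    set g : Fin rk → Fin k := fun m => ⟨m.val % k, Nat.mod_lt _ hk0⟩ with hg
    have hginj : Set.InjOn g Bfib := by
      intro m hm m' hm' heq
      have e1 : m.val / k = i.val := congrArg Fin.val hm
      have e2 : m'.val / k = i.val := congrArg Fin.val hm'
      have e3 : m.val % k = m'.val % k := congrArg Fin.val heq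
      have e4 := Nat.div_add_mod m.val k
      have e5 := Nat.div_add_mod m'.val k
      apply Fin.ext
      rw [← e4, ← e5, e1, e2, e3]
    calc Bfib.ncard = (g '' Bfib).ncard := (Set.ncard_image_of_injOn hginj).symm
      _ ≤ (Set.univ : Set (Fin k)).ncard :=
          Set.ncard_le_ncard (Set.subset_univ _) (Set.toFinite _)
      _ = k := by rw [Set.ncard_univ, Nat.card_eq_fintype_card, Fintype.card_fin]
  calc A.ncard = (ψ '' A).ncard := (Set.ncard_image_of_injOn hinj).symm
    _ ≤ Bfib.ncard := Set.ncard_le_ncard himg (Set.toFinite _)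
    _ ≤ k := hBcard


theorem stmt_0 {V : Type*} [Fintype V] (G : SimpleGraph V) (r k : ℕ)
    (hr : 1 ≤ r) (hk : 1 ≤ k) :
    ∃ c : Sym2 V → Fin r,
      ∀ v : V, deg G v ≤ r * k - 1 →
        ∀ i : Fin r, {u | G.Adj v u ∧ c s(v, u) = i}.ncard ≤ k := by
  obtain ⟨c, hc⟩ := stmt_0' G r k hr hk
  exact ⟨c, fun v hv i => hc v hv i⟩
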